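/- Let n ≥ 1 and define a : ℕ → ℝ as follows: if n is odd, a(k) = ⌊k/n⌋ + (1 + (−1)^{k mod n})/2; if n is even, a(k) = (⌊k/n⌋ + 1/2)·(1 + (−1)^{k mod n}). Then for every t ∈ ℂ with |t| < 1, ∑_{k≥0} a(k)·t^k = (1 + t^n) / [(1 − t²)(1 − t^n)]. (The right-hand side is the Molien/Hilbert series of the Â_{n−1} orbifold ℂ²/ℤ_n, so a(k) counts the single-trace gauge invariant operators of degree k; in particular, for odd n, a(2βn) = 2β and, for even n, a(2βn) = 4β + 1.) -/

import Mathlib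

private lemma hasSum_finset_sum' {α : Type*} {s : Finset α} (f : α → ℕ → ℂ) (a : α → ℂ)
    (h : ∀ i ∈ s, HasSum (f i) (a i)) :
    HasSum (fun k => ∑ i ∈ s, f i k) (∑ i ∈ s, a i) := by
  classical
  induction s using Finset.induction_on with
  | empty => simpa using hasSum_zero
  | insert _ _ hx ih =>
    rename_i b s2
    simp only [Finset.sum_insert hx]
    exact (h b (Finset.mem_insert_self _ _)).add
      (ih fun i hi => h i (Finset.mem_insert_of_mem hi))

private lemma aux_row (x : ℂ) (hx : ‖x‖ < 1) (A B : ℂ) :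
    HasSum (fun q : ℕ => ((q : ℂ) * A + B) * x ^ q)
      (A * (x / (1 - x) ^ 2) + B * (1 / (1 - x))) := by
  have h1 := (hasSum_coe_mul_geometric_of_norm_lt_one hx).mul_left A
  have h2 := (hasSum_geometric_of_norm_lt_one hx).mul_left B
  have := h1.add h2
  convert this using 2 with q
  · rfl
  · ring
  · rw [one_div]

theorem A_series_coefficients (n : ℕ) (hn : 1 ≤ n) (t : ℂ) (ht : ‖t‖ < 1) :
    HasSum
      (fun k : ℕ =>
        (if Odd n then ((k / n : ℕ) : ℂ) + (1 + (-1 : ℂ) ^ (k % n)) / 2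
         else (((k / n : ℕ) : ℂ) + 1 / 2) * (1 + (-1 : ℂ) ^ (k % n))) * t ^ k)
      ((1 + t ^ n) / ((1 - t ^ 2) * (1 - t ^ n))) := by
  classical
  set f : ℕ → ℂ := fun k : ℕ =>
        (if Odd n then ((k / n : ℕ) : ℂ) + (1 + (-1 : ℂ) ^ (k % n)) / 2
         else (((k / n : ℕ) : ℂ) + 1 / 2) * (1 + (-1 : ℂ) ^ (k % n))) * t ^ k with hf
  have htn : ‖t‖ < 1 := ht
  have hxn : ‖t ^ n‖ < 1 := by
    rw [norm_pow]
    calc ‖t‖ ^ n ≤ ‖t‖ ^ 1 := pow_le_pow_of_le_one (norm_nonneg t) htn.le hn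
    _ = ‖t‖ := pow_one _
    _ < 1 := htn
  set x : ℂ := t ^ n with hxdef
  -- basic nonvanishing
  have ht1 : t ≠ 1 := by rintro rfl; simp at ht
  have ht1' : t - 1 ≠ 0 := sub_ne_zero.mpr ht1
  have ht2 : -t ≠ 1 := by
    intro h
    have : ‖-t‖ < 1 := by simpa using ht
    rw [h] at this; simp at this
  have ht2' : -t - 1 ≠ 0 := sub_ne_zero.mpr ht2
  have hx1 : (1 : ℂ) - x ≠ 0 := by
    intro h
    have : x = 1 := by linear_combination -h
    rw [this] at hxn; simp at hxn
  have htt : (1 : ℂ) - t ^ 2 ≠ 0 := by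
    intro h
    have h2 : ‖t ^ 2‖ < 1 := by
      rw [norm_pow]
      exact pow_lt_one₀ (norm_nonneg t) htn two_ne_zero
    have : (t : ℂ) ^ 2 = 1 := by linear_combination -h
    rw [this] at h2; simp at h2
  -- coefficients
  set A : ℕ → ℂ := fun r => if Odd n then 1 else (1 + (-1 : ℂ) ^ r) with hA
  set B : ℕ → ℂ := fun r => (1 + (-1 : ℂ) ^ r) / 2 with hB
  have hfval : ∀ q r, r < n → f (n * q + r) = ((q : ℂ) * A r + B r) * x ^ q * t ^ r := by
    intro q r hr
    have hdiv : (n * q + r) / n = q := by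
      rw [Nat.mul_add_div (by omega), Nat.div_eq_of_lt hr]; omega
    have hmod : (n * q + r) % n = r := by
      rw [Nat.mul_add_mod, Nat.mod_eq_of_lt hr]
    have hpow : t ^ (n * q + r) = x ^ q * t ^ r := by
      rw [pow_add, pow_mul]
    simp only [hf, hA, hB, hdiv, hmod, hpow]
    by_cases h : Odd n <;> simp [h] <;> ring
  -- row sums
  set S : ℕ → ℂ := fun r =>
    (A r * (x / (1 - x) ^ 2) + B r * (1 / (1 - x))) * t ^ r with hS
  have hrow : ∀ r ∈ Finset.range n,
      HasSum (fun k => if k % n = r then f k else 0) (S r) := by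
    intro r hr
    rw [Finset.mem_range] at hr
    have hinj : Function.Injective (fun q : ℕ => n * q + r) := by
      intro a b h
      simp only [] at h
      have : n * a = n * b := by omega
      exact Nat.eq_of_mul_eq_mul_left (by omega) this
    rw [← Function.Injective.hasSum_iff hinj]
    · have hmod : ∀ q : ℕ, (n * q + r) % n = r := by
        intro q; rw [Nat.mul_add_mod, Nat.mod_eq_of_lt hr]
      have : (fun q : ℕ => ((q : ℂ) * A r + B r) * x ^ q * t ^ r)
          = ((fun k => if k % n = r then f k else 0) ∘ fun q : ℕ => n * q + r) := by
        funext q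
        simp only [Function.comp, hmod q, if_true, hfval q r hr]
      rw [hS, ← this]
      exact (aux_row x hxn (A r) (B r)).mul_right (t ^ r)
    · intro k hk
      have hne : k % n ≠ r := by
        intro h
        refine hk ⟨k / n, ?_⟩
        show n * (k / n) + r = k
        rw [← h]
        exact Nat.div_add_mod k n
      simp [hne]
  have htot : HasSum f (∑ r ∈ Finset.range n, S r) := by
    have h1 := hasSum_finset_sum' _ _ hrow
    convert h1 using 1
    funext k
    rw [Finset.sum_ite_eq (Finset.range n) (k % n) (fun _ => f k),
      if_pos (Finset.mem_range.mpr (Nat.mod_lt k (by omega : 0 < n)))]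
  -- final algebra
  have h1t : (1 : ℂ) - t ≠ 0 := by
    intro h; exact ht1 (by linear_combination -h)
  have h2t : (1 : ℂ) + t ≠ 0 := by
    intro h
    have : t = -1 := by linear_combination h
    rw [this] at ht; simp at ht
  have hG : ∑ r ∈ Finset.range n, t ^ r = (1 - x) / (1 - t) := by
    rw [geom_sum_eq ht1 n, div_eq_div_iff ht1' h1t, hxdef]; ring
  suffices hval : (∑ r ∈ Finset.range n, S r)
      = (1 + t ^ n) / ((1 - t ^ 2) * (1 - t ^ n)) by rw [← hval]; exact htot
  have hsq : (1 : ℂ) - t ^ 2 = (1 - t) * (1 + t) := by ring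
  by_cases hodd : Odd n
  · have hH : ∑ r ∈ Finset.range n, (-1 : ℂ) ^ r * t ^ r = (1 + x) / (1 + t) := by
      calc ∑ r ∈ Finset.range n, (-1 : ℂ) ^ r * t ^ r
          = ∑ r ∈ Finset.range n, (-t) ^ r :=
            Finset.sum_congr rfl fun r _ => (neg_pow t r).symm
        _ = ((-t) ^ n - 1) / (-t - 1) := geom_sum_eq ht2 n
        _ = (1 + x) / (1 + t) := by
            rw [Odd.neg_pow hodd, div_eq_div_iff ht2' h2t, hxdef]; ring
    have hsplit : (∑ r ∈ Finset.range n, S r)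
        = ((x / (1 - x) ^ 2) + (1 / (1 - x)) / 2) * ∑ r ∈ Finset.range n, t ^ r
          + ((1 / (1 - x)) / 2) * ∑ r ∈ Finset.range n, (-1 : ℂ) ^ r * t ^ r := by
      rw [Finset.mul_sum, Finset.mul_sum, ← Finset.sum_add_distrib]
      refine Finset.sum_congr rfl fun r _ => ?_
      simp only [hS, hA, hB, if_pos hodd]
      ring
    rw [hsplit, hG, hH, ← hxdef, hsq]
    clear_value x
    clear htot hrow hfval
    field_simp
    ring
  · have hH : ∑ r ∈ Finset.range n, (-1 : ℂ) ^ r * t ^ r = (1 - x) / (1 + t) := by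
      calc ∑ r ∈ Finset.range n, (-1 : ℂ) ^ r * t ^ r
          = ∑ r ∈ Finset.range n, (-t) ^ r :=
            Finset.sum_congr rfl fun r _ => (neg_pow t r).symm
        _ = ((-t) ^ n - 1) / (-t - 1) := geom_sum_eq ht2 n
        _ = (1 - x) / (1 + t) := by
            rw [Even.neg_pow (Nat.not_odd_iff_even.mp hodd), div_eq_div_iff ht2' h2t, hxdef]
            ring
    have hsplit : (∑ r ∈ Finset.range n, S r)
        = ((x / (1 - x) ^ 2) + (1 / (1 - x)) / 2) * ∑ r ∈ Finset.range n, t ^ r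
          + ((x / (1 - x) ^ 2) + (1 / (1 - x)) / 2) * ∑ r ∈ Finset.range n, (-1 : ℂ) ^ r * t ^ r := by
      rw [Finset.mul_sum, Finset.mul_sum, ← Finset.sum_add_distrib]
      refine Finset.sum_congr rfl fun r _ => ?_
      simp only [hS, hA, hB, if_neg hodd]
      ring
    rw [hsplit, hG, hH, ← hxdef, hsq]
    clear_value x
    clear htot hrow hfval
    field_simp
    ring
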